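/- Let π(x,y) = (2y(y−x+2)/(x−y)², y²/(x−y)²) for x ≠ y, over the field ℚ of rational numbers. Suppose (x,y) ∈ ℚ² is such that the three points z₀ = (x,y), z₁ = π(z₀), z₂ = π(z₁) each have distinct coordinates (so π is defined at each), and π(z₂) = z₀. Then π(z₀) = z₀ (so z₀ is one of the fixed points). In other words, the Pappus–Steiner map has no points of period exactly 3 over ℚ. -/

import Mathlib

/-- The Pappus–Steiner map `π(x,y) = (2y(y−x+2)/(x−y)², y²/(x−y)²)`. -/
def pap {k : Type*} [Field k] (z : k × k) : k × k :=
  (2 * z.2 * (z.2 - z.1 + 2) / (z.1 - z.2) ^ 2, z.2 ^ 2 / (z.1 - z.2) ^ 2)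

/-- The monic sextic `t⁶ − 33t⁵ + 349t⁴ − 1593t³ + 3277t² − 2895t + 899` has no
rational root (it has no root modulo `3`). -/
lemma pap_aux_sextic (t : ℚ)
    (h : t^6 - 33*t^5 + 349*t^4 - 1593*t^3 + 3277*t^2 - 2895*t + 899 = 0) : False := by
  have heval : Polynomial.eval₂ (algebraMap ℤ ℚ) t (Polynomial.X^6
      - Polynomial.C 33 * Polynomial.X^5 + Polynomial.C 349 * Polynomial.X^4
      - Polynomial.C 1593 * Polynomial.X^3 + Polynomial.C 3277 * Polynomial.X^2
      - Polynomial.C 2895 * Polynomial.X + Polynomial.C 899) = 0 := by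
    simp only [Polynomial.eval₂_add, Polynomial.eval₂_sub, Polynomial.eval₂_mul,
      Polynomial.eval₂_pow, Polynomial.eval₂_X, Polynomial.eval₂_C]
    simp only [eq_intCast]
    push_cast
    linear_combination h
  have hmonic : (Polynomial.X^6
      - Polynomial.C 33 * Polynomial.X^5 + Polynomial.C 349 * Polynomial.X^4
      - Polynomial.C 1593 * Polynomial.X^3 + Polynomial.C 3277 * Polynomial.X^2
      - Polynomial.C 2895 * Polynomial.X + Polynomial.C (899:ℤ)).Monic := by
    monicity!
  have hint : IsIntegral ℤ t := ⟨_, hmonic, heval⟩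
  obtain ⟨m, hm⟩ := IsIntegrallyClosed.isIntegral_iff.mp hint
  have hmq : (m : ℚ) = t := hm
  have hz : m^6 - 33*m^5 + 349*m^4 - 1593*m^3 + 3277*m^2 - 2895*m + 899 = 0 := by
    have : (m:ℚ)^6 - 33*(m:ℚ)^5 + 349*(m:ℚ)^4 - 1593*(m:ℚ)^3 + 3277*(m:ℚ)^2 - 2895*(m:ℚ) + 899 = 0 := by
      rw [hmq]; exact h
    exact_mod_cast this
  have key : ∀ z : ZMod 3, z^6 - 33*z^5 + 349*z^4 - 1593*z^3 + 3277*z^2 - 2895*z + 899 ≠ 0 := by decide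
  exact key (m : ZMod 3) (by exact_mod_cast congrArg (Int.cast : ℤ → ZMod 3) hz)

/-- The Pappus–Steiner map has no points of period exactly `3` over `ℚ`: any
`3`-periodic point (with all iterates defined) is a fixed point. -/
theorem pap_no_period_three (x y : ℚ)
    (h0 : x ≠ y)
    (h1 : (pap (x, y)).1 ≠ (pap (x, y)).2)
    (h2 : (pap (pap (x, y))).1 ≠ (pap (pap (x, y))).2)
    (h3 : pap (pap (pap (x, y))) = (x, y)) :
    pap (x, y) = (x, y) := by
  have hy : y ≠ 0 := by
    intro h
    apply h1
    subst h
    show 2*(0:ℚ)*((0:ℚ) - x + 2) / (x - 0)^2 = (0:ℚ)^2 / (x - 0)^2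
    norm_num
  have hd : x - y ≠ 0 := sub_ne_zero.mpr h0
  have hz1 : pap (x, y) = (2*y*(y-x+2)/(x-y)^2, y^2/(x-y)^2) := rfl
  rw [hz1] at h1 h2 h3
  simp only [ne_eq] at h1
  have hE : 2*y*(y-x+2) - y^2 ≠ 0 := by
    intro h
    apply h1
    show 2*y*(y-x+2)/(x-y)^2 = y^2/(x-y)^2
    have : 2*y*(y-x+2) = y^2 := by linarith [h]
    rw [this]
  have hz2 : pap (2*y*(y-x+2)/(x-y)^2, y^2/(x-y)^2)
      = (2*y^2*(y^2 - 2*y*(y-x+2) + 2*(x-y)^2)/(2*y*(y-x+2) - y^2)^2,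
         y^4/(2*y*(y-x+2) - y^2)^2) := by
    refine Prod.ext ?_ ?_
    · show 2*(y^2/(x-y)^2)*((y^2/(x-y)^2) - (2*y*(y-x+2)/(x-y)^2) + 2)/((2*y*(y-x+2)/(x-y)^2) - (y^2/(x-y)^2))^2 = _
      rw [div_sub_div_same]
      field_simp
    · show (y^2/(x-y)^2)^2/((2*y*(y-x+2)/(x-y)^2) - (y^2/(x-y)^2))^2 = _
      rw [div_sub_div_same]
      field_simp
  rw [hz2] at h2 h3
  simp only [ne_eq] at h2
  have hF : 2*y^2*(y^2 - 2*y*(y-x+2) + 2*(x-y)^2) - y^4 ≠ 0 := by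
    intro h
    apply h2
    show 2*y^2*(y^2 - 2*y*(y-x+2) + 2*(x-y)^2)/(2*y*(y-x+2) - y^2)^2 = y^4/(2*y*(y-x+2) - y^2)^2
    have : 2*y^2*(y^2 - 2*y*(y-x+2) + 2*(x-y)^2) = y^4 := by linarith [h]
    rw [this]
  have hx3 : 2*(y^4/(2*y*(y-x+2) - y^2)^2)
        * ((y^4/(2*y*(y-x+2) - y^2)^2) - (2*y^2*(y^2 - 2*y*(y-x+2) + 2*(x-y)^2)/(2*y*(y-x+2) - y^2)^2) + 2)
        / ((2*y^2*(y^2 - 2*y*(y-x+2) + 2*(x-y)^2)/(2*y*(y-x+2) - y^2)^2) - (y^4/(2*y*(y-x+2) - y^2)^2))^2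
      = x := congrArg Prod.fst h3
  have hy3 : (y^4/(2*y*(y-x+2) - y^2)^2)^2
        / ((2*y^2*(y^2 - 2*y*(y-x+2) + 2*(x-y)^2)/(2*y*(y-x+2) - y^2)^2) - (y^4/(2*y*(y-x+2) - y^2)^2))^2
      = y := congrArg Prod.snd h3
  have key1 : 2*(y^4/(2*y*(y-x+2) - y^2)^2)
        * ((y^4/(2*y*(y-x+2) - y^2)^2) - (2*y^2*(y^2 - 2*y*(y-x+2) + 2*(x-y)^2)/(2*y*(y-x+2) - y^2)^2) + 2)
        / ((2*y^2*(y^2 - 2*y*(y-x+2) + 2*(x-y)^2)/(2*y*(y-x+2) - y^2)^2) - (y^4/(2*y*(y-x+2) - y^2)^2))^2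
      = 2*y^4*(y^4 - 2*y^2*(y^2 - 2*y*(y-x+2) + 2*(x-y)^2) + 2*(2*y*(y-x+2) - y^2)^2)
        / (2*y^2*(y^2 - 2*y*(y-x+2) + 2*(x-y)^2) - y^4)^2 := by
    rw [div_sub_div_same]
    generalize 2*y*(y-x+2) - y^2 = A at hE ⊢
    generalize 2*y^2*(y^2 - 2*y*(y-x+2) + 2*(x-y)^2) = B at hF ⊢
    field_simp
  have key2 : (y^4/(2*y*(y-x+2) - y^2)^2)^2
        / ((2*y^2*(y^2 - 2*y*(y-x+2) + 2*(x-y)^2)/(2*y*(y-x+2) - y^2)^2) - (y^4/(2*y*(y-x+2) - y^2)^2))^2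
      = y^8 / (2*y^2*(y^2 - 2*y*(y-x+2) + 2*(x-y)^2) - y^4)^2 := by
    rw [div_sub_div_same]
    generalize 2*y*(y-x+2) - y^2 = A at hE ⊢
    generalize 2*y^2*(y^2 - 2*y*(y-x+2) + 2*(x-y)^2) = B at hF ⊢
    field_simp
  rw [key1] at hx3
  rw [key2] at hy3
  have G1 : 2*y^4*(y^4 - 2*y^2*(y^2 - 2*y*(y-x+2) + 2*(x-y)^2) + 2*(2*y*(y-x+2) - y^2)^2)
      = x * (2*y^2*(y^2 - 2*y*(y-x+2) + 2*(x-y)^2) - y^4)^2 :=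
    (div_eq_iff (pow_ne_zero 2 hF)).mp hx3
  have G2 : y^8 = y * (2*y^2*(y^2 - 2*y*(y-x+2) + 2*(x-y)^2) - y^4)^2 :=
    (div_eq_iff (pow_ne_zero 2 hF)).mp hy3
  have hyP : y^4 * (64*y^2 + 48*y^3 + 2*y^4 + (-128)*x*y^2 + 8*x*y^3 + (-1)*x*y^4 + (-56)*x^2*y^2 + 8*x^2*y^3 + 64*x^3*y + (-24)*x^3*y^2 + 32*x^4*y + (-16)*x^5) = 0 := by linear_combination G1
  have hyQ : y^4 * ((-64)*y^3 + 17*y^4 + (-1)*y^5 + (-64)*x*y^3 + 8*x*y^4 + 64*x^2*y^2 + (-24)*x^2*y^3 + 32*x^3*y^2 + (-16)*x^4*y) = 0 := by linear_combination G2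
  have hP : (64*y^2 + 48*y^3 + 2*y^4 + (-128)*x*y^2 + 8*x*y^3 + (-1)*x*y^4 + (-56)*x^2*y^2 + 8*x^2*y^3 + 64*x^3*y + (-24)*x^3*y^2 + 32*x^4*y + (-16)*x^5) = 0 := (mul_eq_zero.mp hyP).resolve_left (pow_ne_zero 4 hy)
  have hQ : ((-64)*y^3 + 17*y^4 + (-1)*y^5 + (-64)*x*y^3 + 8*x*y^4 + 64*x^2*y^2 + (-24)*x^2*y^3 + 32*x^3*y^2 + (-16)*x^4*y) = 0 := (mul_eq_zero.mp hyQ).resolve_left (pow_ne_zero 4 hy)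
  have hR : x^13 * (x - 2) * (x - 12)
      * (x^6 - 132*x^5 + 5584*x^4 - 101952*x^3 + 838912*x^2 - 2964480*x + 3682304) = 0 := by
    linear_combination ((-22093824)*x^4*y^2 + 5868672*x^4*y^3 + (-345216)*x^4*y^4 + (-57700352)*x^5*y^2 + 12219712*x^5*y^3 + (-556352)*x^5*y^4 + 22093824*x^6*y + (-100759552)*x^6*y^2 + 19556336*x^6*y^3 + (-888560)*x^6*y^4 + 24559616*x^7*y + (-46518144)*x^7*y^2 + 2026248*x^7*y^3 + 278648*x^7*y^4 + (-5523456)*x^8 + 50111488*x^8*y + (-271488)*x^8*y^2 + (-2215590)*x^8*y^3 + (-3066)*x^8*y^4 + 7668736*x^9 + 4762912*x^9*y + 2656392*x^9*y^2 + 912821*x^9*y^3 + (-49085)*x^9*y^4 + (-4082432)*x^10 + (-8585360)*x^10*y + (-5740343/2)*x^10*y^2 + (2666169/8)*x^10*y^3 + (9523/8)*x^10*y^4 + 1072256*x^11 + 1931208*x^11*y + (-2916449/4)*x^11*y^2 + (-43721/2)*x^11*y^3 + (2327/4)*x^11*y^4 + (-150016)*x^12 + 730316*x^12*y + (972441/16)*x^12*y^2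 + (-102567/32)*x^12*y^3 + (-987/32)*x^12*y^4 + 11456*x^13 + (-56227)*x^13*y + (212673/32)*x^13*y^2 + (6381/32)*x^13*y^3 + (5/16)*x^13*y^4 + (-466)*x^14 + (-5005)*x^14*y + (-14253/32)*x^14*y^2 + (-67/32)*x^14*y^3 + (73/8)*x^15 + (2757/8)*x^15*y + (19/4)*x^15*y^2 + (-1/16)*x^16 + (-59/16)*x^16*y) * hP + ((-22093824)*x^4*y + (-16570368)*x^4*y^2 + (-690432)*x^4*y^3 + 8581120*x^5*y + (-29466624)*x^5*y^2 + (-767488)*x^5*y^3 + 33677312*x^6*y + (-49863424)*x^6*y^2 + (-1220768)*x^6*y^3 + (-44187648)*x^7 + 154439680*x^7*y + 1125376*x^7*y^2 + 1445856*x^7*y^3 + (-4931584)*x^8 + 22637568*x^8*y + (-4758304)*x^8*y^2 + (-284780)*x^8*y^3 + (-51103744)*x^9 + 2314304*x^9*y + (-5200)*x^9*y^2 + (-95104)*x^9*y^3 + (-8638752)*x^10 + (-1761168)*x^10*y + (-492263)*x^10*y^2 + (205863/4)*x^10*y^3 + 10129808*x^11 + 2634640*x^11*y + (-320956)*x^11*y^2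 + (-215/8)*x^11*y^3 + (-2185416)*x^12 + 752000*x^12*y + (135945/8)*x^12*y^2 + (-10295/16)*x^12*y^3 + (-709268)*x^13 + (-61829)*x^13*y + (13655/4)*x^13*y^2 + (1007/32)*x^13*y^3 + (110663/2)*x^14 + (-6624)*x^14*y + (-6445/32)*x^14*y^2 + (-5/16)*x^14*y^3 + 5023*x^15 + (1781/4)*x^15*y + (67/32)*x^15*y^2 + (-1379/4)*x^16 + (-19/4)*x^16*y + (59/16)*x^17) * hQ
  rcases mul_eq_zero.mp hR with h' | hS
  · rcases mul_eq_zero.mp h' with h'' | h12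
    · rcases mul_eq_zero.mp h'' with h13 | h2'
      · -- x = 0 : impossible
        exfalso
        have hx0 : x = 0 := pow_eq_zero_iff (by norm_num : (13:ℕ) ≠ 0) |>.mp h13
        subst hx0
        have hy2 : y^2 = 0 := by
          linear_combination ((1/64) + (-2323/690432)*y + (127/690432)*y^2) * hP + ((721/86304) + (127/345216)*y) * hQ
        exact hy (pow_eq_zero_iff (by norm_num : (2:ℕ) ≠ 0) |>.mp hy2)
      · -- x = 2, y = 1
        have hx2 : x = 2 := sub_eq_zero.mp h2'
        subst hx2
        have hy1 : y = 1 := by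
          linear_combination ((1/512) + (333/16640)*y + (-1507/532480)*y^2 + (49/532480)*y^3) * hP + ((-601/16640) + (147/16640)*y) * hQ
        subst hy1
        show ((2:ℚ)*1*(1-2+2)/(2-1)^2, (1:ℚ)^2/(2-1)^2) = (2, 1)
        norm_num
    · -- x = 12, y = 16
      have hx12 : x = 12 := sub_eq_zero.mp h12
      subst hx12
      have hy16 : y = 16 := by
        linear_combination ((1/248832) + (-923899/2911334400)*y + (26589733/1676928614400)*y^2 + (-314101/1676928614400)*y^3) * hP + ((3701771/970444800) + (-19877381/104808038400)*y + (314101/167692861440)*y^2) * hQ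
      subst hy16
      show ((2:ℚ)*16*(16-12+2)/(12-16)^2, (16:ℚ)^2/(12-16)^2) = (12, 16)
      norm_num
  · -- sextic case : impossible
    exfalso
    exact pap_aux_sextic (x/4) (by linear_combination hS/4096)
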